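/- Given n points each assigned a color, there exists a partition of all points into clusters such that each cluster has at least ℓ points and all points within each cluster have pairwise distinct colors, if and only if every color is used by at most ⌊n/ℓ⌋ points. -/

import Mathlib

open Finset

/-- A feasible `ℓ`-diverse clustering of `n` colored points (all parts of size
at least `ℓ`, all colors distinct within each part) exists iff every color is
used by at most `⌊n/ℓ⌋` points. -/
theorem stmt2 {V Colors : Type*} [Fintype V] [DecidableEq V] [DecidableEq Colors]
    (c : V → Colors) (ℓ : ℕ) (hℓ : 1 ≤ ℓ) (hn : ℓ ≤ Fintype.card V) :
    (∃ P : Finpartition (Finset.univ : Finset V),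
        ∀ p ∈ P.parts, ℓ ≤ p.card ∧ Set.InjOn c ↑p) ↔
      ∀ γ : Colors,
        (Finset.univ.filter (fun v => c v = γ)).card ≤ Fintype.card V / ℓ := by
  classical
  constructor
  · rintro ⟨P, hP⟩ γ
    have hinj : Set.InjOn P.part ↑(univ.filter (fun v => c v = γ)) := by
      intro u hu v hv h
      simp only [coe_filter, Set.mem_setOf_eq] at hu hv
      have hu' := P.mem_part (mem_univ u)
      have hv' := P.mem_part (mem_univ v)
      rw [h] at hu'
      exact (hP _ (P.part_mem.2 (mem_univ v))).2 hu' hv' (hu.2.trans hv.2.symm)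
    have h1 : (univ.filter (fun v => c v = γ)).card ≤ P.parts.card :=
      Finset.card_le_card_of_injOn P.part (fun v _ => P.part_mem.2 (mem_univ v)) hinj
    have h2 : P.parts.card * ℓ ≤ Fintype.card V := by
      calc P.parts.card * ℓ = ∑ _p ∈ P.parts, ℓ := by rw [Finset.sum_const, smul_eq_mul]
      _ ≤ ∑ p ∈ P.parts, p.card := Finset.sum_le_sum fun p hp => (hP p hp).1
      _ = Fintype.card V := by rw [P.sum_card_parts, card_univ]
    exact (Nat.le_div_iff_mul_le hℓ).mpr (le_trans (Nat.mul_le_mul_right ℓ h1) h2)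
  · intro hγ
    set n := Fintype.card V with hn'
    set k := n / ℓ with hk
    have hℓ0 : 0 < ℓ := hℓ
    have hk1 : 1 ≤ k := (Nat.one_le_div_iff hℓ0).mpr hn
    have hkl : k * ℓ ≤ n := Nat.div_mul_le_self n ℓ
    let e : V ≃ Fin n := (Fintype.equivFin V)
    let m : Colors → ℕ := fun γ => sInf {i | ∃ v, c v = γ ∧ (e v : ℕ) = i}
    have hm_spec : ∀ v : V, ∃ w : V, c w = c v ∧ (e w : ℕ) = m (c v) := by
      intro v
      have hne : {i | ∃ w, c w = c v ∧ (e w : ℕ) = i}.Nonempty := ⟨e v, v, rfl, rfl⟩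
      obtain ⟨w, hw1, hw2⟩ := Nat.sInf_mem hne
      exact ⟨w, hw1, hw2⟩
    have hm_le : ∀ v : V, m (c v) ≤ (e v : ℕ) := fun v => Nat.sInf_le ⟨v, rfl, rfl⟩
    have hm_inj : ∀ u v : V, m (c u) = m (c v) → c u = c v := by
      intro u v h
      obtain ⟨w1, hw1, he1⟩ := hm_spec u
      obtain ⟨w2, hw2, he2⟩ := hm_spec v
      have : e w1 = e w2 := Fin.ext (by omega)
      have : w1 = w2 := e.injective this
      rw [← hw1, ← hw2, this]
    let key : V → ℕ ×ₗ ℕ := fun v => toLex (m (c v), (e v : ℕ))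
    have key_inj : Function.Injective key := by
      intro u v h
      have : (e u : ℕ) = (e v : ℕ) := congrArg (fun p => (ofLex p).2) h
      exact e.injective (Fin.ext this)
    letI : LinearOrder V := LinearOrder.lift' key key_inj
    have hle : ∀ u v : V, u ≤ v ↔ key u ≤ key v := fun _ _ => Iff.rfl
    let φ : Fin n ≃o V := monoEquivOfFin V rfl
    -- consecutiveness of colors
    have hconsec : ∀ i j l : Fin n, i ≤ j → j ≤ l → c (φ i) = c (φ l) → c (φ j) = c (φ i) := by
      intro i j l hij hjl hil
      have h1 : key (φ i) ≤ key (φ j) := (hle _ _).mp (φ.monotone hij)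
      have h2 : key (φ j) ≤ key (φ l) := (hle _ _).mp (φ.monotone hjl)
      have hm1 : m (c (φ i)) ≤ m (c (φ j)) := Prod.Lex.monotone_fst _ _ h1
      have hm2 : m (c (φ j)) ≤ m (c (φ l)) := Prod.Lex.monotone_fst _ _ h2
      rw [← hil] at hm2
      exact hm_inj _ _ (le_antisymm hm2 hm1)
    -- rank
    let r : V → ℕ := fun v => ((φ.symm v : Fin n) : ℕ)
    have hr_inj : Function.Injective r := fun u v h =>
      φ.symm.injective (Fin.ext h)
    -- the partition: fibers of r · % k
    let st : Setoid V := ⟨fun u v => r u % k = r v % k,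
      ⟨fun _ => rfl, fun h => h.symm, fun h1 h2 => h1.trans h2⟩⟩
    haveI : DecidableRel st.r := fun u v => by
      change Decidable (r u % k = r v % k); infer_instance
    refine ⟨Finpartition.ofSetoid st, ?_⟩
    intro p hp
    obtain ⟨a, -, ha⟩ := Finset.mem_image.mp hp
    have hpmem : ∀ v : V, v ∈ p ↔ r v % k = r a % k := by
      intro v
      rw [← ha]
      simp only [Finset.mem_filter, Finset.mem_univ, true_and, Set.mem_setOf_eq]
      exact ⟨fun h => h.symm, fun h => h.symm⟩
    constructor
    · -- size lower bound: j ↦ φ (r a % k + j * k)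
      have hra : r a % k < k := Nat.mod_lt _ hk1
      have hmap : ∀ j : Fin ℓ, r a % k + (j : ℕ) * k < n := by
        intro j
        have h1 : (j : ℕ) + 1 ≤ ℓ := j.2
        have h2 : ((j : ℕ) + 1) * k ≤ ℓ * k := Nat.mul_le_mul_right _ h1
        have h3 : ℓ * k ≤ n := by rw [mul_comm]; exact hkl
        rw [add_mul, one_mul] at h2
        omega
      have hcardeq : ℓ = (Finset.univ : Finset (Fin ℓ)).card := by simp
      rw [hcardeq]
      apply Finset.card_le_card_of_injOn (fun j : Fin ℓ => φ ⟨r a % k + (j : ℕ) * k, hmap j⟩)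
      · intro j _
        rw [Finset.mem_coe, hpmem]
        show ((φ.symm (φ _) : Fin n) : ℕ) % k = _
        rw [φ.symm_apply_apply]
        show (r a % k + (j : ℕ) * k) % k = r a % k
        rw [Nat.add_mul_mod_self_right, Nat.mod_mod_of_dvd _ dvd_rfl]
      · intro j1 _ j2 _ h
        have := φ.injective h
        have : r a % k + (j1 : ℕ) * k = r a % k + (j2 : ℕ) * k := congrArg Fin.val this
        have : (j1 : ℕ) = (j2 : ℕ) := by
          have hkpos : 0 < k := hk1
          exact Nat.eq_of_mul_eq_mul_right hkpos (by omega)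
        exact Fin.ext this
    · -- InjOn c
      have main : ∀ u v : V, c u = c v → r u % k = r v % k → r u < r v → False := by
        intro u v hc hmod hlt
        have hdvd : k ∣ r v - r u := (Nat.modEq_iff_dvd' hlt.le).mp hmod
        have hge : r u + k ≤ r v := by
          obtain ⟨t, ht⟩ := hdvd
          have : t ≠ 0 := by rintro rfl; omega
          have : k ≤ k * t := Nat.le_mul_of_pos_right k (Nat.pos_of_ne_zero this)
          omega
        -- k+1 points of color c u
        have hrv : r v < n := (φ.symm v).2
        have hmap2 : ∀ t : Fin (k+1), r u + (t : ℕ) < n := by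
          intro t
          have : (t : ℕ) ≤ k := Nat.lt_succ_iff.mp t.2
          omega
        have hcol : ∀ t : Fin (k+1), c (φ ⟨r u + (t : ℕ), hmap2 t⟩) = c u := by
          intro t
          have hu' : φ ⟨r u, (φ.symm u).2⟩ = u := by
            show φ (φ.symm u) = u
            · exact φ.apply_symm_apply u
          have hv' : φ ⟨r v, hrv⟩ = v := φ.apply_symm_apply v
          have := hconsec ⟨r u, (φ.symm u).2⟩ ⟨r u + (t : ℕ), hmap2 t⟩ ⟨r v, hrv⟩
            (by simp) (by simp; omega) (by rw [hu', hv', hc])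
          rw [hu'] at this
          exact this
        have hcard : k + 1 ≤ (univ.filter (fun w => c w = c u)).card := by
          have : k + 1 = (Finset.univ : Finset (Fin (k+1))).card := by simp
          rw [this]
          apply Finset.card_le_card_of_injOn (fun t : Fin (k+1) => φ ⟨r u + (t : ℕ), hmap2 t⟩)
          · intro t _
            simp only [Finset.mem_coe, Finset.mem_filter, Finset.mem_univ, true_and]
            exact hcol t
          · intro t1 _ t2 _ h
            have h2 : r u + (t1 : ℕ) = r u + (t2 : ℕ) := congrArg Fin.val (φ.injective h)
            exact Fin.ext (by omega)
        have := hγ (c u)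
        omega
      intro u hu v hv hc
      by_contra hne
      simp only [Finset.mem_coe] at hu hv
      rw [hpmem] at hu hv
      have hmod : r u % k = r v % k := hu.trans hv.symm
      have hruv : r u ≠ r v := fun h => hne (hr_inj h)
      rcases Nat.lt_or_ge (r u) (r v) with hlt | hge
      · exact main u v hc hmod hlt
      · exact main v u hc.symm hmod.symm (by omega)
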